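/- Let f be a randomized two-winner scv mechanism for m candidates at arbitrary locations in a Euclidean space and n voters which is independent and monotone: there exist functions q_{k,l} such that for every action profile a, p_{k,l}(a) = q_{k,l}(n_k, n_l), where n_k is the number of voters voting for candidate k, and q_{k,l} is weakly increasing in each of its two arguments (over vote counts arising from valid profiles, i.e., q_{k,l}(n_k + 1, n_l) ≥ q_{k,l}(n_k, n_l) and q_{k,l}(n_k, n_l + 1) ≥ q_{k,l}(n_k, n_l)). Then f is strategy-proof. -/

import Mathlib

open Finset

/-- Cost of a point `z` when the pair of candidates `(y k, y l)` is elected: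
the distance to the closer of the two winners. -/
noncomputable def pairCost {α : Type*} [PseudoMetricSpace α] {m : ℕ}
    (y : Fin m → α) (k l : Fin m) (z : α) : ℝ :=
  min (dist z (y k)) (dist z (y l))

/-- Social cost of the pair `(y k, y l)` on the location profile `x`. -/
noncomputable def socialCost {α : Type*} [PseudoMetricSpace α] {m n : ℕ}
    (y : Fin m → α) (k l : Fin m) (x : Fin n → α) : ℝ :=
  ∑ i, pairCost y k l (x i)

/-- Optimal social cost over all pairs of distinct candidates. -/
noncomputable def OPT {α : Type*} [PseudoMetricSpace α] {m n : ℕ}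
    (y : Fin m → α) (x : Fin n → α) : ℝ :=
  sInf {c : ℝ | ∃ k l : Fin m, k ≠ l ∧ c = socialCost y k l x}

/-- A location profile `x` is consistent with an action profile `a` if every
voter votes for (one of) her nearest candidate(s). -/
def Consistent {α : Type*} [PseudoMetricSpace α] {m n : ℕ}
    (y : Fin m → α) (a : Fin n → Fin m) (x : Fin n → α) : Prop :=
  ∀ (i : Fin n) (k : Fin m), dist (x i) (y (a i)) ≤ dist (x i) (y k)

/-- `f` is a randomized two-winner mechanism: on every action profile it gives a
probability distribution over unordered pairs of distinct candidates
(represented by a symmetric nonnegative function vanishing on the diagonal whose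
values over the pairs `k < l` sum to one). -/
def IsRandMech {m n : ℕ} (f : (Fin n → Fin m) → Fin m → Fin m → ℝ) : Prop :=
  ∀ a : Fin n → Fin m, (∀ k l, 0 ≤ f a k l) ∧ (∀ k l, f a k l = f a l k) ∧
    (∀ k, f a k k = 0) ∧
    ∑ p ∈ univ.filter (fun p : Fin m × Fin m => p.1 < p.2), f a p.1 p.2 = 1

/-- Expected cost of the point `z` under the lottery `f a`. -/
noncomputable def expCost {α : Type*} [PseudoMetricSpace α] {m n : ℕ}
    (y : Fin m → α) (f : (Fin n → Fin m) → Fin m → Fin m → ℝ)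
    (a : Fin n → Fin m) (z : α) : ℝ :=
  ∑ p ∈ univ.filter (fun p : Fin m × Fin m => p.1 < p.2),
    f a p.1 p.2 * pairCost y p.1 p.2 z

/-- Expected social cost of the randomized mechanism `f` on action profile `a`
and location profile `x`. -/
noncomputable def expSC {α : Type*} [PseudoMetricSpace α] {m n : ℕ}
    (y : Fin m → α) (f : (Fin n → Fin m) → Fin m → Fin m → ℝ)
    (a : Fin n → Fin m) (x : Fin n → α) : ℝ :=
  ∑ p ∈ univ.filter (fun p : Fin m × Fin m => p.1 < p.2),
    f a p.1 p.2 * socialCost y p.1 p.2 x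

/-- Strategy-proofness of a randomized two-winner mechanism: voting for a
nearest candidate always minimizes a voter's expected cost, whatever the
other voters do. -/
def RandSP {α : Type*} [PseudoMetricSpace α] {m n : ℕ}
    (y : Fin m → α) (f : (Fin n → Fin m) → Fin m → Fin m → ℝ) : Prop :=
  ∀ (i : Fin n) (xi : α) (a : Fin n → Fin m) (astar ai' : Fin m),
    (∀ k, dist xi (y astar) ≤ dist xi (y k)) →
    expCost y f (Function.update a i astar) xi ≤
      expCost y f (Function.update a i ai') xi

/-- Number of votes received by candidate `k` under action profile `a`. -/
def votes {m n : ℕ} (a : Fin n → Fin m) (k : Fin m) : ℕ :=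
  (univ.filter fun i => a i = k).card

lemma votes_update {m n : ℕ} (a : Fin n → Fin m) (i : Fin n) (c k : Fin m) :
    votes (Function.update a i c) k =
      ((univ.erase i).filter (fun j => a j = k)).card + (if c = k then 1 else 0) := by
  classical
  unfold votes
  rw [Finset.card_filter, Finset.card_filter,
    ← Finset.sum_erase_add univ _ (Finset.mem_univ i)]
  congr 1
  · refine Finset.sum_congr rfl fun j hj => ?_
    rw [Function.update_apply]
    simp [Finset.mem_erase.mp hj |>.1]
  · simp

lemma votes_sum_lt {m n : ℕ} (a : Fin n → Fin m) (i : Fin n) (c k l : Fin m)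
    (hk : c ≠ k) (hl : c ≠ l) (hkl : k ≠ l) :
    votes (Function.update a i c) k + votes (Function.update a i c) l < n := by
  classical
  rw [votes_update, votes_update, if_neg hk, if_neg hl]
  have hdisj : Disjoint ((univ.erase i).filter (fun j => a j = k))
      ((univ.erase i).filter (fun j => a j = l)) := by
    refine Finset.disjoint_left.mpr fun j hj1 hj2 => ?_
    exact hkl ((Finset.mem_filter.mp hj1).2 ▸ (Finset.mem_filter.mp hj2).2 ▸ rfl)
  calc ((univ.erase i).filter (fun j => a j = k)).card + 0 +
        (((univ.erase i).filter (fun j => a j = l)).card + 0)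
      = (((univ.erase i).filter (fun j => a j = k)) ∪
          ((univ.erase i).filter (fun j => a j = l))).card := by
        rw [Finset.card_union_of_disjoint hdisj]; ring
    _ ≤ (univ.erase i).card :=
        Finset.card_le_card (Finset.union_subset (Finset.filter_subset _ _)
          (Finset.filter_subset _ _))
    _ < univ.card := Finset.card_erase_lt_of_mem (Finset.mem_univ i)
    _ = n := Finset.card_univ.trans (Fintype.card_fin n)

/-- Any independent and monotone randomized two-winner scv mechanism (the
probability of each pair depends only on, and is weakly increasing in, the
vote counts of its two members) is strategy-proof. -/
theorem stmt9 {dim m n : ℕ} (y : Fin m → EuclideanSpace ℝ (Fin dim))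
    (f : (Fin n → Fin m) → Fin m → Fin m → ℝ) (hmech : IsRandMech f)
    (q : Fin m → Fin m → ℕ → ℕ → ℝ)
    (hind : ∀ (a : Fin n → Fin m) (k l : Fin m),
      f a k l = q k l (votes a k) (votes a l))
    (hmono : ∀ (k l : Fin m) (s t : ℕ), k ≠ l → s + t < n →
      q k l s t ≤ q k l (s + 1) t ∧ q k l s t ≤ q k l s (t + 1)) :
    RandSP y f := by
  classical
  intro i xi a astar ai' hstar
  by_cases htriv : astar = ai'
  · subst htriv; exact le_refl _
  set A := Function.update a i astar with hA
  set B := Function.update a i ai' with hB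
  set d0 : ℝ := dist xi (y astar) with hd0
  set P := univ.filter (fun p : Fin m × Fin m => p.1 < p.2) with hP
  -- cost lower bound
  have hcost_ge : ∀ p : Fin m × Fin m, d0 ≤ pairCost y p.1 p.2 xi := fun p =>
    le_min (hstar p.1) (hstar p.2)
  have hcost_star : ∀ p : Fin m × Fin m, p.1 = astar ∨ p.2 = astar →
      pairCost y p.1 p.2 xi = d0 := by
    rintro p (h | h)
    · rw [pairCost, h]; exact min_eq_left (hstar p.2)
    · rw [pairCost, h]; exact min_eq_right (hstar p.1)
  -- votes comparisons
  have hvotes_eq : ∀ k : Fin m, k ≠ astar → k ≠ ai' → votes A k = votes B k := by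
    intro k h1 h2
    rw [hA, hB, votes_update, votes_update, if_neg (fun h => h1 h.symm),
      if_neg (fun h => h2 h.symm)]
  have hvotes_star : votes B astar + 1 = votes A astar := by
    rw [hA, hB, votes_update, votes_update, if_pos rfl, if_neg (fun h => htriv h.symm)]
  have hvotes_ai : votes A ai' + 1 = votes B ai' := by
    rw [hA, hB, votes_update, votes_update, if_pos rfl, if_neg htriv]
  -- pointwise inequality on pairs not containing astar
  have hkey : ∀ p ∈ P, f A p.1 p.2 * (pairCost y p.1 p.2 xi - d0) ≤
      f B p.1 p.2 * (pairCost y p.1 p.2 xi - d0) := by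
    intro p hp
    have hlt : p.1 < p.2 := (Finset.mem_filter.mp hp).2
    have hne : p.1 ≠ p.2 := Fin.ne_of_lt hlt
    by_cases hs : p.1 = astar ∨ p.2 = astar
    · rw [hcost_star p hs, sub_self, mul_zero, mul_zero]
    · push_neg at hs
      have hfle : f A p.1 p.2 ≤ f B p.1 p.2 := by
        rw [hind A, hind B]
        by_cases h1 : p.1 = ai'
        · have h2 : p.2 ≠ ai' := fun h => hne (h1.trans h.symm)
          have hv : votes B p.1 = votes A p.1 + 1 := by rw [h1, ← hvotes_ai]
          rw [← hvotes_eq p.2 hs.2 h2, hv]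
          have hsum : votes A p.1 + votes A p.2 < n := by
            rw [h1, hA]
            exact votes_sum_lt a i astar ai' p.2 htriv (fun h => hs.2 h.symm)
              (fun h => hne (h1.trans h))
          exact (hmono p.1 p.2 (votes A p.1) (votes A p.2) hne hsum).1
        · by_cases h2 : p.2 = ai'
          · have hv : votes B p.2 = votes A p.2 + 1 := by rw [h2, ← hvotes_ai]
            rw [← hvotes_eq p.1 hs.1 h1, hv]
            have hsum : votes A p.1 + votes A p.2 < n := by
              rw [h2, hA]
              exact votes_sum_lt a i astar p.1 ai' (fun h => hs.1 h.symm) htriv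
                (fun h => hne (h.trans h2.symm))
            exact (hmono p.1 p.2 (votes A p.1) (votes A p.2) hne hsum).2
          · rw [hvotes_eq p.1 hs.1 h1, hvotes_eq p.2 hs.2 h2]
      exact mul_le_mul_of_nonneg_right hfle (sub_nonneg.mpr (hcost_ge p))
  -- rewrite expected costs
  have hrw : ∀ b : Fin n → Fin m,
      expCost y f b xi = (∑ p ∈ P, f b p.1 p.2 * (pairCost y p.1 p.2 xi - d0)) + d0 := by
    intro b
    have hsum1 := (hmech b).2.2.2
    rw [expCost]
    have : ∑ p ∈ P, f b p.1 p.2 * (pairCost y p.1 p.2 xi - d0)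
        = (∑ p ∈ P, f b p.1 p.2 * pairCost y p.1 p.2 xi)
          - (∑ p ∈ P, f b p.1 p.2) * d0 := by
      rw [Finset.sum_mul, ← Finset.sum_sub_distrib]
      exact Finset.sum_congr rfl fun p _ => by ring
    rw [this, hP] at *
    rw [hsum1]
    ring
  rw [hrw A, hrw B]
  exact add_le_add_left (Finset.sum_le_sum hkey) d0
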